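/- Every (l,t)-cycle is a balanced graph: the lexicographic product of C_l (l = 2 or l ≡ 0 mod 4, l ≥ 8) with the edgeless graph on t vertices is bipartite and has no induced cycle of length ≡ 2 mod 4. -/

import Mathlib

open SimpleGraph in
/-- A closed walk is an induced (chordless) cycle: it is a cycle and every edge of the
graph between vertices of the cycle is an edge of the cycle. -/
def IsInducedCycle {V : Type*} {G : SimpleGraph V} {v : V} (c : G.Walk v v) : Prop :=
  c.IsCycle ∧ ∀ x ∈ c.support, ∀ y ∈ c.support, G.Adj x y → s(x, y) ∈ c.edges

/-- A graph is balanced: bipartite (2-colorable) and every induced cycle has length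
divisible by 4 (equivalently, no induced cycle of length ≡ 2 mod 4). -/
def BalancedGraph {V : Type*} (G : SimpleGraph V) : Prop :=
  G.Colorable 2 ∧ ∀ (v : V) (c : G.Walk v v), IsInducedCycle c → 4 ∣ c.length
/-- The lexicographic product of graphs. -/
def lexProd {α β : Type*} (X : SimpleGraph α) (Y : SimpleGraph β) : SimpleGraph (α × β) where
  Adj p q := X.Adj p.1 q.1 ∨ (p.1 = q.1 ∧ Y.Adj p.2 q.2)
  symm := by
    constructor
    rintro p q (h | ⟨h1, h2⟩)
    · exact Or.inl h.symm
    · exact Or.inr ⟨h1.symm, h2.symm⟩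
  loopless := by
    constructor
    rintro p (h | ⟨_, h2⟩)
    · exact h.ne rfl
    · exact h2.ne rfl

/-- The `(l,t)`-cycle: lexicographic product of the cycle `C_l` with the edgeless
graph on `t` vertices. -/
def ltCycle (l t : ℕ) : SimpleGraph (Fin l × Fin t) :=
  lexProd (SimpleGraph.cycleGraph l) (⊥ : SimpleGraph (Fin t))

section Aux

open SimpleGraph

/-- `getVert` agrees with indexing into the support list. -/
lemma walk_support_getElem? {V : Type*} {G : SimpleGraph V} {u v : V}
    (p : G.Walk u v) {i : ℕ} (hi : i ≤ p.length) :
    p.support[i]? = some (p.getVert i) := by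
  induction p generalizing i with
  | nil =>
    simp only [Walk.length_nil, Nat.le_zero] at hi
    subst hi; simp
  | cons h q ih =>
    cases i with
    | zero => simp
    | succ i =>
      rw [Walk.support_cons, List.getElem?_cons_succ, Walk.getVert_cons_succ]
      exact ih (by simpa using hi)

/-- `getVert` is injective on `[0, length)` for a cycle. -/
lemma cycle_getVert_inj {V : Type*} {G : SimpleGraph V} {v : V} {c : G.Walk v v}
    (hc : c.IsCycle) {i j : ℕ} (hi : i < c.length) (hj : j < c.length)
    (h : c.getVert i = c.getVert j) : i = j := by
  have hn := hc.three_le_length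
  have key : ∀ {a b : ℕ}, 1 ≤ a → a ≤ c.length → 1 ≤ b → b ≤ c.length →
      c.getVert a = c.getVert b → a = b := by
    intro a b ha1 ha2 hb1 hb2 hab
    have hga : c.support.tail[a - 1]? = some (c.getVert a) := by
      rw [List.getElem?_tail]
      have h : a - 1 + 1 = a := by omega
      rw [h]
      exact walk_support_getElem? c ha2
    have hgb : c.support.tail[b - 1]? = some (c.getVert b) := by
      rw [List.getElem?_tail]
      have h : b - 1 + 1 = b := by omega
      rw [h]
      exact walk_support_getElem? c hb2
    rw [hab] at hga
    obtain ⟨hlta, hea⟩ := List.getElem?_eq_some_iff.mp hga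
    obtain ⟨hltb, heb⟩ := List.getElem?_eq_some_iff.mp hgb
    have := hc.support_nodup.getElem_inj_iff.mp (hea.trans heb.symm)
    omega
  rcases Nat.eq_zero_or_pos i with rfl | hi1
  · rcases Nat.eq_zero_or_pos j with rfl | hj1
    · rfl
    · exfalso
      have hjl : c.getVert j = c.getVert c.length := by
        rw [Walk.getVert_length, ← h, Walk.getVert_zero]
      have := key hj1 (by omega) (by omega) le_rfl hjl
      omega
  · rcases Nat.eq_zero_or_pos j with rfl | hj1
    · exfalso
      have hil : c.getVert i = c.getVert c.length := by
        rw [Walk.getVert_length, h, Walk.getVert_zero]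
      have := key hi1 (by omega) (by omega) le_rfl hil
      omega
    · exact key hi1 (by omega) hj1 (by omega) h

/-- Every edge of a walk is of the form `s(getVert k, getVert (k+1))`. -/
lemma walk_mem_edges_exists {V : Type*} {G : SimpleGraph V} {u v x y : V} (p : G.Walk u v)
    (h : s(x, y) ∈ p.edges) :
    ∃ k < p.length, s(x, y) = s(p.getVert k, p.getVert (k + 1)) := by
  induction p with
  | nil => simp at h
  | @cons a b w hadj q ih =>
    rw [Walk.edges_cons, List.mem_cons] at h
    rcases h with h | h
    · refine ⟨0, by simp, ?_⟩
      rw [Walk.getVert_zero, Walk.getVert_cons_succ, Walk.getVert_zero]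
      exact h
    · obtain ⟨k, hk, hke⟩ := ih h
      exact ⟨k + 1, by simp; omega, by
        rw [Walk.getVert_cons_succ, Walk.getVert_cons_succ]; exact hke⟩

end Aux

open Fin.CommRing in
open SimpleGraph in
/-- every `(l,t)`-cycle is balanced. -/
theorem ltCycle_balanced (l t : ℕ) (hl : l = 2 ∨ (l % 4 = 0 ∧ 8 ≤ l)) (ht : 0 < t) :
    BalancedGraph (ltCycle l t) := by
  obtain ⟨m, rfl⟩ : ∃ m, l = m + 2 := by
    rcases hl with h | ⟨h1, h2⟩ <;> exact ⟨l - 2, by omega⟩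
  have hleven : (m + 2) % 2 = 0 := by rcases hl with h | ⟨h1, h2⟩ <;> omega
  -- a key parity fact about adjacency in the cycle graph
  have key : ∀ x y : Fin (m + 2), y - x = 1 → x.val % 2 ≠ y.val % 2 := by
    intro x y hxy
    have hy : y = 1 + x := by rwa [sub_eq_iff_eq_add] at hxy
    subst hy
    have h1 : ((1 + x : Fin (m + 2))).val = (1 + x.val) % (m + 2) := by
      rw [Fin.val_add, Fin.val_one]
    have hx := x.isLt
    rcases Nat.lt_or_ge (x.val + 1) (m + 2) with h | h
    · rw [Nat.mod_eq_of_lt (by omega)] at h1; omega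
    · have hxm : x.val = m + 1 := by omega
      rw [hxm] at h1
      have : (1 + (m + 1)) % (m + 2) = 0 := by
        have : 1 + (m + 1) = m + 2 := by omega
        rw [this, Nat.mod_self]
      rw [this] at h1
      omega
  constructor
  · -- 2-colorability
    refine ⟨SimpleGraph.Coloring.mk (fun p => (⟨p.1.val % 2, by omega⟩ : Fin 2)) ?_⟩
    rintro ⟨a, b⟩ ⟨a', b'⟩ hadj hcol
    have hcol' : a.val % 2 = a'.val % 2 := by
      simpa using congrArg Fin.val hcol
    rcases hadj with hadj | ⟨_, hbot⟩
    · rw [SimpleGraph.cycleGraph_adj] at hadj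
      rcases hadj with h | h
      · exact key a' a h hcol'.symm
      · exact key a a' h hcol'
    · exact hbot.elim
  · -- induced cycles have length divisible by 4
    rintro v c ⟨hcyc, hind⟩
    set n := c.length with hndef
    have hn3 : 3 ≤ n := hcyc.three_le_length
    haveI : NeZero n := ⟨by omega⟩
    haveI : Fact (1 < n) := ⟨by omega⟩
    set a : ℕ → Fin (m + 2) := fun i => (c.getVert i).1 with ha
    have han : a n = a 0 := by
      show (c.getVert n).1 = (c.getVert 0).1
      rw [hndef, Walk.getVert_length, Walk.getVert_zero]
    have hstep : ∀ i, i < n → (cycleGraph (m + 2)).Adj (a i) (a (i + 1)) := by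
      intro i hi
      have h := c.adj_getVert_succ hi
      rcases h with h | ⟨_, hbot⟩
      · exact h
      · exact hbot.elim
    have hchord : ∀ i j, i < n → j < n → (cycleGraph (m + 2)).Adj (a i) (a j) →
        (j = i + 1 ∨ (i + 1 = n ∧ j = 0)) ∨ (i = j + 1 ∨ (j + 1 = n ∧ i = 0)) := by
      intro i j hi hj hadj
      have hx : c.getVert i ∈ c.support :=
        Walk.mem_support_iff_exists_getVert.mpr ⟨i, rfl, by omega⟩
      have hy : c.getVert j ∈ c.support :=
        Walk.mem_support_iff_exists_getVert.mpr ⟨j, rfl, by omega⟩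
      have hGadj : (ltCycle (m + 2) t).Adj (c.getVert i) (c.getVert j) := Or.inl hadj
      have hedge := hind _ hx _ hy hGadj
      obtain ⟨k, hk, hke⟩ := walk_mem_edges_exists c hedge
      rw [Sym2.eq_iff] at hke
      rcases hke with ⟨h1, h2⟩ | ⟨h1, h2⟩
      · have hik : i = k := cycle_getVert_inj hcyc hi hk h1
        rcases Nat.lt_or_ge (k + 1) n with hk1 | hk1
        · have : j = k + 1 := cycle_getVert_inj hcyc hj hk1 h2
          left; left; omega
        · have hkn : k + 1 = n := by omega
          have h2' : c.getVert j = c.getVert 0 := by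
            rw [h2, hkn, Walk.getVert_length, Walk.getVert_zero]
          have : j = 0 := cycle_getVert_inj hcyc hj (by omega) h2'
          left; right; omega
      · have hjk : j = k := cycle_getVert_inj hcyc hj hk h2
        rcases Nat.lt_or_ge (k + 1) n with hk1 | hk1
        · have : i = k + 1 := cycle_getVert_inj hcyc hi hk1 h1
          right; left; omega
        · have hkn : k + 1 = n := by omega
          have h1' : c.getVert i = c.getVert 0 := by
            rw [h1, hkn, Walk.getVert_length, Walk.getVert_zero]
          have : i = 0 := cycle_getVert_inj hcyc hi (by omega) h1'
          right; right; omega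
    -- move to cyclic indices
    set b : ZMod n → Fin (m + 2) := fun k => a k.val with hb
    have hcastval : ∀ k : ZMod n, ((k.val : ℕ) : ZMod n) = k := by
      intro k; rw [ZMod.natCast_val, ZMod.cast_id]
    have haval : ∀ k : ZMod n, a ((k + 1).val) = a (k.val + 1) := by
      intro k
      have hk := ZMod.val_lt k
      rw [ZMod.val_add, ZMod.val_one]
      rcases Nat.lt_or_ge (k.val + 1) n with h | h
      · rw [Nat.mod_eq_of_lt h]
      · have h2 : k.val + 1 = n := by omega
        rw [h2, Nat.mod_self, han]
    have hbstep : ∀ k : ZMod n, (cycleGraph (m + 2)).Adj (b k) (b (k + 1)) := by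
      intro k
      show (cycleGraph (m + 2)).Adj (a k.val) (a (k + 1).val)
      rw [haval k]
      exact hstep k.val (ZMod.val_lt k)
    have hbchord : ∀ x y : ZMod n, (cycleGraph (m + 2)).Adj (b x) (b y) →
        y = x + 1 ∨ x = y + 1 := by
      intro x y h
      have hc := hchord x.val y.val (ZMod.val_lt x) (ZMod.val_lt y) h
      rcases hc with (h1 | ⟨h1, h2⟩) | (h1 | ⟨h1, h2⟩)
      · left
        rw [← hcastval y, ← hcastval x, h1, Nat.cast_add, Nat.cast_one]
      · left
        have hx1 : x + 1 = 0 := by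
          rw [← hcastval x, ← Nat.cast_one, ← Nat.cast_add, h1, ZMod.natCast_self]
        rw [hx1, ← hcastval y, h2, Nat.cast_zero]
      · right
        rw [← hcastval y, ← hcastval x, h1, Nat.cast_add, Nat.cast_one]
      · right
        have hy1 : y + 1 = 0 := by
          rw [← hcastval y, ← Nat.cast_one, ← Nat.cast_add, h1, ZMod.natCast_self]
        rw [hy1, ← hcastval x, h2, Nat.cast_zero]
    by_cases hrep : ∃ x y : ZMod n, x ≠ y ∧ b x = b y
    · -- a repeated first coordinate forces a 4-cycle
      obtain ⟨x, y, hxy, hbxy⟩ := hrep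
      have h1 : (cycleGraph (m + 2)).Adj (b (x + 1)) (b y) := by
        have := (hbstep x).symm
        rwa [hbxy] at this
      have hy2 : y = x + 1 + 1 := by
        rcases hbchord _ _ h1 with h | h
        · exact h
        · exact absurd (add_right_cancel h) hxy
      have h2 : (cycleGraph (m + 2)).Adj (b (x - 1)) (b y) := by
        have := hbstep (x - 1)
        rwa [sub_add_cancel, hbxy] at this
      have hx2 : x - 1 = y + 1 := by
        rcases hbchord _ _ h2 with h | h
        · exfalso; rw [sub_add_cancel] at h; exact hxy h.symm
        · exact h
      rw [hy2] at hx2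
      have h4 : ((4 : ℕ) : ZMod n) = 0 := by
        push_cast
        linear_combination -hx2
      have hdvd : n ∣ 4 := (ZMod.natCast_eq_zero_iff 4 n).mp h4
      have hle : n ≤ 4 := Nat.le_of_dvd (by norm_num) hdvd
      have hn4 : n = 4 := by
        interval_cases n
        · exfalso; revert hdvd; norm_num
        · rfl
      rw [hn4]
    · -- all first coordinates distinct: the cycle wraps around C_l
      push_neg at hrep
      have hbinj : Function.Injective b := by
        intro x y h
        by_contra hne
        exact hrep x y hne h
      have hcard : n ≤ m + 2 := by
        have := Fintype.card_le_of_injective b hbinj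
        simpa [ZMod.card] using this
      rcases hl with hl2 | ⟨hl4, hl8⟩
      · omega
      · set e : ZMod n → Fin (m + 2) := fun k => b (k + 1) - b k with he
        have hpm : ∀ k, e k = 1 ∨ e k = -1 := by
          intro k
          have h := hbstep k
          rw [cycleGraph_adj] at h
          rcases h with h | h
          · right
            show b (k + 1) - b k = -1
            rw [← h]; ring
          · left; exact h
        have hbsucc : ∀ k, b (k + 1) = b k + e k := by
          intro k
          show b (k + 1) = b k + (b (k + 1) - b k)
          ring
        have hconst : ∀ k, e (k + 1) = e k := by
          intro k
          rcases hpm k with h1 | h1 <;> rcases hpm (k + 1) with h2 | h2 <;>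
            try (rw [h1, h2])
          all_goals {
            exfalso
            have hb2 : b (k + 1 + 1) = b k := by
              rw [hbsucc (k + 1), hbsucc k, h1, h2]; ring
            have hkk := hbinj hb2
            have h20 : ((2 : ℕ) : ZMod n) = 0 := by
              push_cast
              linear_combination hkk
            have := (ZMod.natCast_eq_zero_iff 2 n).mp h20
            have := Nat.le_of_dvd (by norm_num) this
            omega }
        have hconstnat : ∀ j : ℕ, e (j : ZMod n) = e 0 := by
          intro j
          induction j with
          | zero => norm_num
          | succ j ih => rw [Nat.cast_add, Nat.cast_one, hconst, ih]
        have hconst' : ∀ k, e k = e 0 := by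
          intro k
          rw [← hcastval k, hconstnat]
        have htel : ∀ i : ℕ, b (i : ZMod n) = b 0 + i • e 0 := by
          intro i
          induction i with
          | zero => simp
          | succ i ih =>
            rw [Nat.cast_add, Nat.cast_one, hbsucc, hconst', ih, succ_nsmul]
            ring
        have hwrap := htel n
        rw [ZMod.natCast_self] at hwrap
        have hsum : n • e 0 = 0 := (left_eq_add.mp hwrap)
        have hcast : ((n : ℕ) : Fin (m + 2)) = 0 := by
          rcases hpm 0 with h1 | h1
          · rw [h1, nsmul_eq_mul, mul_one] at hsum; exact hsum
          · rw [h1, nsmul_eq_mul, mul_neg, mul_one, neg_eq_zero] at hsum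
            exact hsum
        have hdvd : (m + 2) ∣ n := Fin.natCast_eq_zero.mp hcast
        exact dvd_trans (by omega : 4 ∣ (m + 2)) hdvd
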